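/- Let f₁, f₂ ∈ C(Σ, M) satisfy f₁(0) ≠ f₂(∞), where 0 ∈ ℂ ⊂ Σ and ∞ is the point at infinity of Σ. Then there exist ε₁ > 0, ε₂ > 0 and R > 0 such that for every h ∈ C(Σ, M), every nonzero a ∈ ℂ, and every c ∈ ℂ, if d(h, f₁) ≤ ε₁ and d(h ∘ g_{a,c}, f₂) ≤ ε₂, then |c| ≤ R. (This is the boundedness claim for the translation parts of near-reparametrizations used in the proof of the main properness theorem for the affine group.) -/

import Mathlib

open OnePoint

/-- The reparametrization `g_{a,c} : Σ → Σ` of the Riemann sphere `Σ = OnePoint ℂ`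
extending `z ↦ a · (z − c)` on `ℂ` and fixing the point at infinity. -/
noncomputable def gAff (a c : ℂ) (ha : a ≠ 0) : C(OnePoint ℂ, OnePoint ℂ) where
  toFun := OnePoint.map (fun z => a * (z - c))
  continuous_toFun :=
    (Homeomorph.onePointCongr ((Homeomorph.subRight c).trans (Homeomorph.mulLeft₀ a ha))).continuous

/-- If `f₁(0) ≠ f₂(∞)` then the translation parts of affine reparametrizations carrying a map
near `f₁` to a map near `f₂` are bounded. -/
theorem near_reparametrization_translations_bounded {M : Type*} [MetricSpace M] [CompactSpace M]
    (f₁ f₂ : C(OnePoint ℂ, M)) (hf : f₁ (((0 : ℂ) : OnePoint ℂ)) ≠ f₂ ∞) :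
    ∃ ε₁ > 0, ∃ ε₂ > 0, ∃ R > 0,
      ∀ (h : C(OnePoint ℂ, M)) (a c : ℂ) (ha : a ≠ 0),
        dist h f₁ ≤ ε₁ → dist (h.comp (gAff a c ha)) f₂ ≤ ε₂ → ‖c‖ ≤ R := by
  set D := dist (f₁ ((0 : ℂ) : OnePoint ℂ)) (f₂ ∞) with hD
  have hDpos : 0 < D := dist_pos.mpr hf
  -- continuity of f₂ at ∞ along coe
  have htend : Filter.Tendsto (fun z : ℂ => f₂ (z : OnePoint ℂ)) (Bornology.cobounded ℂ)
      (nhds (f₂ ∞)) := by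
    have h1 : Filter.Tendsto (fun z : ℂ => ((z : OnePoint ℂ)))
        (Filter.coclosedCompact ℂ) (nhds (∞ : OnePoint ℂ)) := OnePoint.tendsto_coe_infty
    have heq : Bornology.cobounded ℂ = Filter.coclosedCompact ℂ := by
      rw [Metric.cobounded_eq_cocompact, Filter.coclosedCompact_eq_cocompact]
    rw [heq]
    exact (f₂.continuous.tendsto ∞).comp h1
  have hball : ∀ᶠ z : ℂ in Bornology.cobounded ℂ, dist (f₂ (z : OnePoint ℂ)) (f₂ ∞) < D / 2 :=
    htend (Metric.ball_mem_nhds _ (by linarith))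
  rw [Filter.eventually_iff] at hball
  have hbd : Bornology.IsBounded {z : ℂ | dist (f₂ (z : OnePoint ℂ)) (f₂ ∞) < D / 2}ᶜ :=
    Bornology.isBounded_def.mpr (by simpa using hball)
  obtain ⟨R, hR⟩ := (Metric.isBounded_iff_subset_closedBall 0).mp hbd
  refine ⟨D / 4, by linarith, D / 4, by linarith, max R 1, lt_max_of_lt_right one_pos,
    fun h a c ha h1 h2 => ?_⟩
  by_contra hc
  push_neg at hc
  have hcnot : (c : ℂ) ∉ {z : ℂ | dist (f₂ (z : OnePoint ℂ)) (f₂ ∞) < D / 2}ᶜ := by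
    intro hmem
    have := hR hmem
    simp only [Metric.mem_closedBall, dist_zero_right] at this
    have : ‖c‖ ≤ R := by simpa using this
    exact absurd (this.trans (le_max_left _ _)) (not_le.mpr hc)
  simp only [Set.mem_compl_iff, Set.mem_setOf_eq, not_not] at hcnot
  -- h (gAff a c ha c) = h 0
  have hg : (gAff a c ha) ((c : ℂ) : OnePoint ℂ) = ((0 : ℂ) : OnePoint ℂ) := by
    show OnePoint.map (fun z => a * (z - c)) ((c : ℂ) : OnePoint ℂ) = _
    rw [OnePoint.map_some]
    simp
  have e1 : dist (h ((0 : ℂ) : OnePoint ℂ)) (f₁ ((0 : ℂ) : OnePoint ℂ)) ≤ D / 4 :=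
    le_trans (ContinuousMap.dist_apply_le_dist _) h1
  have e2 : dist (h ((0 : ℂ) : OnePoint ℂ)) (f₂ ((c : ℂ) : OnePoint ℂ)) ≤ D / 4 := by
    have := le_trans (ContinuousMap.dist_apply_le_dist ((c : ℂ) : OnePoint ℂ)) h2
    simpa [ContinuousMap.comp_apply, hg] using this
  have : D < D / 4 + D / 4 + D / 2 := by
    calc D = dist (f₁ ((0 : ℂ) : OnePoint ℂ)) (f₂ ∞) := hD
    _ ≤ dist (f₁ ((0 : ℂ) : OnePoint ℂ)) (f₂ ((c : ℂ) : OnePoint ℂ))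
        + dist (f₂ ((c : ℂ) : OnePoint ℂ)) (f₂ ∞) := dist_triangle _ _ _
    _ ≤ (dist (f₁ ((0 : ℂ) : OnePoint ℂ)) (h ((0 : ℂ) : OnePoint ℂ))
        + dist (h ((0 : ℂ) : OnePoint ℂ)) (f₂ ((c : ℂ) : OnePoint ℂ)))
        + dist (f₂ ((c : ℂ) : OnePoint ℂ)) (f₂ ∞) :=
          add_le_add_left (dist_triangle _ _ _) _
    _ < D / 4 + D / 4 + D / 2 := by
          rw [dist_comm (f₁ _)]
          exact add_lt_add_of_le_of_lt (add_le_add e1 e2) hcnot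
  linarith
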